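/- Let n be a power of 2, ω = e^{2πi/n}, and define the Fourier transform by x̂_f = (1/√n) Σ_{i∈[n]} ω^{-if} x_i. For σ odd (so invertible mod n) and a, q ∈ [n], define the permutation operator (P_{σ,a,q} x̂)_i = x̂_{σ(i-a)} · ω^{iσq}, and the index permutation π_{σ,q}(i) = σ(i-q) mod n. Then for every x ∈ ℂ^n and every i ∈ [n], the inverse Fourier transform satisfies F^{-1}(P_{σ,a,q} x̂)_{π_{σ,q}(i)} = x_i · ω^{aσi}. -/

import Mathlib

open Complex

/-- The (orthonormal) discrete Fourier transform `x̂_f = (1/√n) ∑_i ω^{-if} x_i`. -/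
noncomputable def dft (n : ℕ) [NeZero n] (x : ZMod n → ℂ) : ZMod n → ℂ :=
  fun f => (1 / (Real.sqrt n : ℂ)) *
    ∑ i : ZMod n, Complex.exp (-2 * Real.pi * Complex.I * ((i.val : ℂ) * (f.val : ℂ)) / n) * x i

/-- The inverse transform `x_j = (1/√n) ∑_f ω^{jf} x̂_f`. -/
noncomputable def idft (n : ℕ) [NeZero n] (xh : ZMod n → ℂ) : ZMod n → ℂ :=
  fun j => (1 / (Real.sqrt n : ℂ)) *
    ∑ f : ZMod n, Complex.exp (2 * Real.pi * Complex.I * ((j.val : ℂ) * (f.val : ℂ)) / n) * xh f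

/-- The spectrum permutation `(P_{σ,a,q} x̂)_i = x̂_{σ(i-a)} · ω^{iσq}`. -/
noncomputable def Pperm (n : ℕ) [NeZero n] (σ a q : ZMod n) (xh : ZMod n → ℂ) :
    ZMod n → ℂ :=
  fun i => xh (σ * (i - a)) *
    Complex.exp (2 * Real.pi * Complex.I * (((i * σ * q : ZMod n).val : ℂ)) / n)

section echAux

variable (n : ℕ) [NeZero n]

/-- The primitive `n`-th root of unity `exp(2πi/n)`. -/
noncomputable def zetaN : ℂ := Complex.exp (2 * Real.pi * Complex.I / n)

lemma zetaN_prim : IsPrimitiveRoot (zetaN n) n :=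
  Complex.isPrimitiveRoot_exp n (NeZero.ne n)

/-- The additive character `k ↦ ζ^(k.val)` on `ZMod n`. -/
noncomputable def ech (k : ZMod n) : ℂ := (zetaN n) ^ k.val

lemma exp_eq_ech (m : ℕ) :
    Complex.exp (2 * Real.pi * Complex.I * (m : ℂ) / n) = (zetaN n) ^ m := by
  rw [zetaN, ← Complex.exp_nat_mul]
  ring_nf

lemma zetaN_pow_mod (m : ℕ) : (zetaN n) ^ (m % n) = (zetaN n) ^ m := by
  conv_rhs => rw [← Nat.div_add_mod m n]
  rw [pow_add, pow_mul, (zetaN_prim n).pow_eq_one, one_pow, one_mul]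

lemma ech_add (k l : ZMod n) : ech n (k + l) = ech n k * ech n l := by
  rw [ech, ech, ech, ZMod.val_add, zetaN_pow_mod, pow_add]

lemma ech_mulval (k l : ZMod n) : ech n (k * l) = (zetaN n) ^ (k.val * l.val) := by
  rw [ech, ZMod.val_mul, zetaN_pow_mod]

lemma ech_zero : ech n 0 = 1 := by
  rw [ech, ZMod.val_zero, pow_zero]

lemma ech_ne_zero (k : ZMod n) : ech n k ≠ 0 :=
  pow_ne_zero _ (Complex.exp_ne_zero _)

lemma ech_neg (k : ZMod n) : ech n (-k) = (ech n k)⁻¹ := by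
  have h : ech n k * ech n (-k) = 1 := by
    rw [← ech_add, add_neg_cancel, ech_zero]
  field_simp [ech_ne_zero n k] at h ⊢
  linear_combination h

lemma zmod_sum_pow (z : ℂ) : ∑ f : ZMod n, z ^ (ZMod.val f) = ∑ j ∈ Finset.range n, z ^ j := by
  refine Finset.sum_nbij' (fun f => ZMod.val f) (fun j => (j : ZMod n)) ?_ ?_ ?_ ?_ ?_
  · intro f _
    exact Finset.mem_range.2 (ZMod.val_lt f)
  · intro j _
    exact Finset.mem_univ _
  · intro f _
    exact ZMod.natCast_rightInverse f
  · intro j hj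
    exact ZMod.val_cast_of_lt (Finset.mem_range.1 hj)
  · intro f _
    rfl

lemma ech_sum (c : ZMod n) :
    ∑ f : ZMod n, ech n (f * c) = if c = 0 then (n : ℂ) else 0 := by
  by_cases hc : c = 0
  · simp [hc, ech_zero]
  · simp only [hc, if_false]
    have h1 : ∀ f : ZMod n, ech n (f * c) = ((zetaN n) ^ c.val) ^ (ZMod.val f) := by
      intro f
      rw [ech_mulval, ← pow_mul, mul_comm]
    simp only [h1]
    rw [zmod_sum_pow]
    have hz1 : (zetaN n) ^ c.val ≠ 1 := by
      intro h
      rw [(zetaN_prim n).pow_eq_one_iff_dvd] at h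
      have hdvd := h
      have hlt := ZMod.val_lt c
      have hne : c.val ≠ 0 := fun h => hc (by rwa [← ZMod.val_eq_zero])
      exact absurd (Nat.le_of_dvd (Nat.pos_of_ne_zero hne) hdvd) (not_le.2 hlt)
    rw [geom_sum_eq hz1]
    have : ((zetaN n) ^ c.val) ^ n = 1 := by
      rw [← pow_mul, mul_comm, pow_mul, (zetaN_prim n).pow_eq_one, one_pow]
    rw [this, sub_self, zero_div]

end echAux

/-- Pseudorandom spectrum permutation in time domain: for `n` a power of two and
`σ` odd, `F⁻¹(P_{σ,a,q} x̂)_{π_{σ,q}(i)} = x_i · ω^{aσi}` where `π_{σ,q}(i) = σ(i-q)`. -/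
theorem idft_Pperm (n : ℕ) [NeZero n] (hn : ∃ k, n = 2 ^ k)
    (σ a q : ZMod n) (hσ : Odd σ.val) (x : ZMod n → ℂ) (i : ZMod n) :
    idft n (Pperm n σ a q (dft n x)) (σ * (i - q))
      = x i * Complex.exp (2 * Real.pi * Complex.I * (((a * σ * i : ZMod n).val : ℂ)) / n) := by
  classical
  obtain ⟨k, hk⟩ := hn
  have hn0 : (n : ℂ) ≠ 0 := Nat.cast_ne_zero.2 (NeZero.ne n)
  have hσu : IsUnit σ := by
    have hcop : σ.val.Coprime n := by
      have h2 : σ.val.Coprime (2 ^ k) := Nat.Coprime.pow_right k (hσ.coprime_two_right)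
      rwa [← hk] at h2
    have := (ZMod.isUnit_iff_coprime σ.val n).2 hcop
    rwa [ZMod.natCast_val, ZMod.cast_id] at this
  have key : ∀ u v : ZMod n,
      Complex.exp (2 * Real.pi * Complex.I * ((u.val : ℂ) * (v.val : ℂ)) / n) = ech n (u * v) := by
    intro u v
    rw [ech_mulval, ← exp_eq_ech]
    push_cast
    ring_nf
  have keyneg : ∀ u v : ZMod n,
      Complex.exp (-2 * Real.pi * Complex.I * ((u.val : ℂ) * (v.val : ℂ)) / n)
        = ech n (-(u * v)) := by
    intro u v
    rw [ech_neg, ← key u v, ← Complex.exp_neg]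
    ring_nf
  have key1 : ∀ w : ZMod n,
      Complex.exp (2 * Real.pi * Complex.I * ((w.val : ℂ)) / n) = ech n w := by
    intro w
    rw [ech, ← exp_eq_ech]
  simp only [idft, Pperm, dft, key, keyneg, key1]
  have step1 : ∀ f : ZMod n,
      ech n (σ * (i - q) * f) *
          (((1 / (Real.sqrt n : ℂ)) * ∑ m : ZMod n, ech n (-(m * (σ * (f - a)))) * x m) *
          ech n (f * σ * q))
        = (1 / (Real.sqrt n : ℂ)) *
            ∑ m : ZMod n, ech n (f * (σ * (i - m))) * (ech n (m * σ * a) * x m) := by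
    intro f
    simp only [Finset.mul_sum, Finset.sum_mul]
    refine Finset.sum_congr rfl fun m _ => ?_
    have harg : σ * (i - q) * f + -(m * (σ * (f - a))) + f * σ * q
        = f * (σ * (i - m)) + m * σ * a := by ring
    have h2 : ech n (σ * (i - q) * f) * ech n (-(m * (σ * (f - a)))) * ech n (f * σ * q)
        = ech n (f * (σ * (i - m))) * ech n (m * σ * a) := by
      rw [← ech_add, ← ech_add, harg, ech_add]
    linear_combination (1 / (Real.sqrt n : ℂ)) * x m * h2
  simp only [step1]
  rw [← Finset.mul_sum, ← mul_assoc]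
  have step2 : ∀ m : ZMod n,
      ∑ f : ZMod n, ech n (f * (σ * (i - m))) * (ech n (m * σ * a) * x m)
        = (if σ * (i - m) = 0 then (n : ℂ) else 0) * (ech n (m * σ * a) * x m) := by
    intro m
    rw [← Finset.sum_mul, ech_sum]
  rw [Finset.sum_comm]
  simp only [step2]
  have hcond : ∀ m : ZMod n, (σ * (i - m) = 0) ↔ (m = i) := by
    intro m
    rw [hσu.mul_right_eq_zero, sub_eq_zero, eq_comm]
  have : ∀ m : ZMod n,
      (if σ * (i - m) = 0 then (n : ℂ) else 0) * (ech n (m * σ * a) * x m)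
        = if m = i then (n : ℂ) * (ech n (m * σ * a) * x m) else 0 := by
    intro m
    by_cases h : m = i
    · rw [if_pos ((hcond m).2 h), if_pos h]
    · rw [if_neg (fun hc => h ((hcond m).1 hc)), if_neg h, zero_mul]
  simp only [this]
  rw [Finset.sum_ite_eq' Finset.univ i
    (fun m => (n : ℂ) * (ech n (m * σ * a) * x m))]
  simp only [Finset.mem_univ, if_true]
  have hs : (Real.sqrt n : ℂ) * (Real.sqrt n : ℂ) = (n : ℂ) := by
    norm_cast
    exact Real.mul_self_sqrt (Nat.cast_nonneg n)
  have hsne : (Real.sqrt n : ℂ) ≠ 0 := by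
    intro h
    rw [h, zero_mul] at hs
    exact hn0 hs.symm
  have hperm : ech n (i * σ * a) = ech n (a * σ * i) := by
    congr 1
    ring
  rw [hperm]
  rw [div_mul_div_comm, one_mul, hs, one_div, inv_mul_cancel_left₀ hn0]
  ring
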